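/- For nonnegative integers n and r, the degenerate r-Bell polynomial satisfies the Dobinski-like formula φ_{n,λ}^{(r)}(x) = e^{-x} ∑_{k=0}^∞ (k+r)_{n,λ} x^k / k!. -/
import Mathlib


/-- Generalized falling factorial `(y)_{m,λ} = y(y-λ)⋯(y-(m-1)λ)`. -/
noncomputable def degFallFact (y l : ℝ) (m : ℕ) : ℝ :=
  ∏ i ∈ Finset.range m, (y - i * l)

lemma real_exp_eq_tsum (x : ℝ) : Real.exp x = ∑' n : ℕ, x ^ n / n.factorial := by
  rw [Real.exp_eq_exp_ℝ, NormedSpace.exp_eq_tsum_div]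

lemma fall_prod_eq (m j : ℕ) :
    (∏ i ∈ Finset.range j, (((m + j : ℕ) : ℝ) - i)) = ((m + j).descFactorial j : ℝ) := by
  rw [Nat.descFactorial_eq_prod_range, Nat.cast_prod]
  refine Finset.prod_congr rfl fun i hi => ?_
  have hi' := Finset.mem_range.1 hi
  rw [Nat.cast_sub (by omega)]

lemma g_shift (x : ℝ) (j m : ℕ) :
    (∏ i ∈ Finset.range j, (((m + j : ℕ) : ℝ) - i)) * x ^ (m + j) / (m + j).factorial
      = x ^ j * (x ^ m / m.factorial) := by
  rw [fall_prod_eq]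
  have h : (m.factorial : ℝ) * ((m + j).descFactorial j : ℝ) = ((m + j).factorial : ℝ) := by
    rw [← Nat.cast_mul]
    norm_cast
    have := Nat.factorial_mul_descFactorial (n := m + j) (k := j) (by omega)
    simpa using this
  have hm : (m.factorial : ℝ) ≠ 0 := by positivity
  have hD : (((m + j).descFactorial j : ℕ) : ℝ) ≠ 0 := by
    rw [Nat.cast_ne_zero, Ne, Nat.descFactorial_eq_zero_iff_lt]
    omega
  rw [← h]
  field_simp
  rw [pow_add]
  ring

lemma g_zero (x : ℝ) {j k : ℕ} (hk : k < j) :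
    (∏ i ∈ Finset.range j, ((k : ℝ) - i)) * x ^ k / k.factorial = 0 := by
  have : (∏ i ∈ Finset.range j, ((k : ℝ) - i)) = 0 := by
    apply Finset.prod_eq_zero (Finset.mem_range.2 hk)
    simp
  rw [this]; ring

lemma g_summable (x : ℝ) (j : ℕ) :
    Summable (fun k : ℕ => (∏ i ∈ Finset.range j, ((k : ℝ) - i)) * x ^ k / k.factorial) := by
  rw [← summable_nat_add_iff j]
  have : (fun m : ℕ => (∏ i ∈ Finset.range j, (((m + j : ℕ) : ℝ) - i)) * x ^ (m + j)
      / (m + j).factorial) = fun m : ℕ => x ^ j * (x ^ m / m.factorial) := by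
    funext m; exact g_shift x j m
  rw [this]
  exact (Real.summable_pow_div_factorial x).mul_left (x ^ j)

lemma g_tsum (x : ℝ) (j : ℕ) :
    ∑' k : ℕ, (∏ i ∈ Finset.range j, ((k : ℝ) - i)) * x ^ k / k.factorial
      = x ^ j * Real.exp x := by
  rw [← Summable.sum_add_tsum_nat_add j (g_summable x j)]
  have h1 : ∑ k ∈ Finset.range j, (∏ i ∈ Finset.range j, ((k : ℝ) - i)) * x ^ k / k.factorial
      = 0 := by
    apply Finset.sum_eq_zero
    intro k hk
    exact g_zero x (Finset.mem_range.1 hk)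
  have h2 : (fun m : ℕ => (∏ i ∈ Finset.range j, (((m + j : ℕ) : ℝ)- i)) * x ^ (m + j)
      / (m + j).factorial) = fun m : ℕ => x ^ j * (x ^ m / m.factorial) := by
    funext m; exact g_shift x j m
  rw [h1, zero_add, h2, tsum_mul_left, ← real_exp_eq_tsum]

/-- Dobinski-like formula for the degenerate r-Bell polynomials
`φ_{n,λ}^{(r)}(x) = ∑_{k=0}^n S(n,k) x^k = e^{-x} ∑_{k≥0} (k+r)_{n,λ} x^k/k!`,
where `S n k = {n+r brace k+r}_{r,λ}` are the degenerate r-Stirling numbers of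
the second kind, defined by `(x+r)_{n,λ} = ∑_{k=0}^n S(n,k) (x)_k`. -/
theorem degBell_dobinski (l : ℝ) (r n : ℕ) (S : ℕ → ℕ → ℝ)
    (hS : ∀ (m : ℕ) (x : ℝ), degFallFact (x + r) l m =
      ∑ k ∈ Finset.range (m + 1), S m k * ∏ i ∈ Finset.range k, (x - i))
    (x : ℝ) :
    ∑ k ∈ Finset.range (n + 1), S n k * x ^ k =
      Real.exp (-x) * ∑' k : ℕ, degFallFact (k + r) l n * x ^ k / k.factorial := by
  have key : (∑' k : ℕ, degFallFact (k + r) l n * x ^ k / k.factorial)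
      = Real.exp x * ∑ j ∈ Finset.range (n + 1), S n j * x ^ j := by
    have h1 : (fun k : ℕ => degFallFact (k + r) l n * x ^ k / k.factorial)
        = fun k : ℕ => ∑ j ∈ Finset.range (n + 1),
            S n j * ((∏ i ∈ Finset.range j, ((k : ℝ) - i)) * x ^ k / k.factorial) := by
      funext k
      rw [hS n (k : ℝ), Finset.sum_mul, Finset.sum_div]
      refine Finset.sum_congr rfl fun j _ => ?_
      ring
    rw [h1, Summable.tsum_finsetSum (fun j _ => ((g_summable x j).mul_left (S n j)))]
    have h2 : ∀ j ∈ Finset.range (n + 1),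
        (∑' k : ℕ, S n j * ((∏ i ∈ Finset.range j, ((k : ℝ) - i)) * x ^ k / k.factorial))
          = S n j * (x ^ j * Real.exp x) := by
      intro j _
      rw [tsum_mul_left, g_tsum]
    rw [Finset.sum_congr rfl h2, Finset.mul_sum]
    refine Finset.sum_congr rfl fun j _ => ?_
    ring
  rw [key, ← mul_assoc, ← Real.exp_add, neg_add_cancel, Real.exp_zero, one_mul]
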